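/- arXiv:2506.24080 — 2 statements merged into one kernel-verified Lean document; each statement's English description precedes it below -/
import Mathlib

section
/- A finite simple graph G admits a link-irregular labeling if and only if for every pair of distinct vertices x, y of G, either the links L(x) and L(y) are non-isomorphic as graphs, or the edge sets E(L(x)) and E(L(y)) (viewed as sets of edges of G) are not equal. -/
open SimpleGraph

variable {V : Type*}

/-- Two vertices have isomorphic labeled links: an equivalence of neighborhoods preserving
adjacency and edge labels. -/
def LabeledLinkIso (G : SimpleGraph V) (ℓ : Sym2 V → ℕ+) (u v : V) : Prop :=
  ∃ e : (G.neighborSet u) ≃ (G.neighborSet v),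
    (∀ a b : G.neighborSet u, G.Adj a.1 b.1 ↔ G.Adj (e a).1 (e b).1) ∧
    (∀ a b : G.neighborSet u, G.Adj a.1 b.1 → ℓ s(a.1, b.1) = ℓ s((e a).1, (e b).1))

/-- An edge labeling is link-irregular if distinct vertices have non-isomorphic labeled links. -/
def IsLinkIrregular (G : SimpleGraph V) (ℓ : Sym2 V → ℕ+) : Prop :=
  ∀ u v : V, u ≠ v → ¬ LabeledLinkIso G ℓ u v

/-- A graph admits a link-irregular labeling. -/
def HasLinkIrregularLabeling (G : SimpleGraph V) : Prop :=
  ∃ ℓ : Sym2 V → ℕ+, IsLinkIrregular G ℓ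

/-- The link-irregular labeling number η(G): the minimum number of distinct labels used
on the edges of G over all link-irregular labelings, or ∞ if none exists. -/
noncomputable def linkIrregularNumber (G : SimpleGraph V) : ℕ∞ :=
  sInf {c : ℕ∞ | ∃ ℓ : Sym2 V → ℕ+, IsLinkIrregular G ℓ ∧ c = ((ℓ '' G.edgeSet).ncard : ℕ∞)}

/-- The edge set of the link of x, viewed as a set of edges of G. -/
def linkEdgeSet (G : SimpleGraph V) (x : V) : Set (Sym2 V) :=
  {e | e ∈ G.edgeSet ∧ ∀ v ∈ e, v ∈ G.neighborSet x}

/-- Active neighborhood. -/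
def activeNeighborSet (G : SimpleGraph V) (x : V) : Set V :=
  {u ∈ G.neighborSet x | ∃ w ∈ G.neighborSet x, G.Adj u w}

/-- A graph is cut-irregular if distinct vertex-deleted subgraphs are non-isomorphic. -/
def CutIrregular (H : SimpleGraph V) : Prop :=
  ∀ u v : V, u ≠ v → ¬ Nonempty ((H.induce ({u} : Set V)ᶜ) ≃g (H.induce ({v} : Set V)ᶜ))

/-- The wheel graph W_n: a cycle C_n together with a universal vertex. -/
def wheelGraph (n : ℕ) : SimpleGraph (Option (Fin n)) where
  Adj x y :=
    match x, y with
    | none, none => False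
    | none, some _ => True
    | some _, none => True
    | some i, some j => (cycleGraph n).Adj i j
  symm := by
    constructor
    rintro (_|i) (_|j) h
    · exact h
    · trivial
    · trivial
    · exact (cycleGraph n).symm.symm _ _ h
  loopless := by
    constructor
    rintro (_|i) h
    · exact h
    · exact (cycleGraph n).loopless.irrefl i h

/-- The join of two graphs. -/
def graphJoin {W : Type*} (G : SimpleGraph V) (H : SimpleGraph W) : SimpleGraph (V ⊕ W) where
  Adj x y :=
    match x, y with
    | Sum.inl a, Sum.inl b => G.Adj a b
    | Sum.inr a, Sum.inr b => H.Adj a b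
    | _, _ => True
  symm := by
    constructor
    rintro (a|a) (b|b) h
    · exact G.symm.symm _ _ h
    · trivial
    · trivial
    · exact H.symm.symm _ _ h
  loopless := by
    constructor
    rintro (a|a) h
    · exact G.loopless.irrefl a h
    · exact H.loopless.irrefl a h

/-- The hypercube graph Q_n. -/
def hypercubeGraph (n : ℕ) : SimpleGraph (Fin n → Bool) where
  Adj x y := (Finset.univ.filter fun i => x i ≠ y i).card = 1
  symm := by
    constructor
    intro x y h
    have : (Finset.univ.filter fun i => y i ≠ x i) = (Finset.univ.filter fun i => x i ≠ y i) := by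
      apply Finset.filter_congr
      intro i _
      simp [ne_comm]
    rw [this]
    exact h
  loopless := by
    constructor
    intro x h
    simp at h

section Aux
variable {V : Type*} (G : SimpleGraph V)

lemma edge_mem_link {x a b : V} (ha : a ∈ G.neighborSet x) (hb : b ∈ G.neighborSet x)
    (hab : G.Adj a b) : s(a, b) ∈ linkEdgeSet G x := by
  refine ⟨hab, ?_⟩
  intro v hv
  rw [Sym2.mem_iff] at hv
  rcases hv with rfl | rfl <;> assumption

lemma labeledLinkIso_of_iso_of_eq [Fintype V] {x y : V}
    (hiso : Nonempty ((G.induce (G.neighborSet x)) ≃g (G.induce (G.neighborSet y))))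
    (hedge : linkEdgeSet G x = linkEdgeSet G y) (ℓ : Sym2 V → ℕ+) :
    LabeledLinkIso G ℓ x y := by
  classical
  set S : Set V := activeNeighborSet G x with hS
  have hSx : S ⊆ G.neighborSet x := fun u hu => hu.1
  have hSy : S ⊆ G.neighborSet y := by
    rintro u ⟨hu, w, hw, huw⟩
    have h1 : s(u, w) ∈ linkEdgeSet G y := by
      rw [← hedge]; exact edge_mem_link G hu hw huw
    exact h1.2 u (Sym2.mem_mk_left u w)
  -- adjacency in N(y) forces membership in S
  have hact : ∀ a b : V, a ∈ G.neighborSet y → b ∈ G.neighborSet y → G.Adj a b →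
      a ∈ S ∧ b ∈ S ∧ a ∈ G.neighborSet x ∧ b ∈ G.neighborSet x := by
    intro a b ha hb hab
    have h1 : s(a, b) ∈ linkEdgeSet G x := by
      rw [hedge]; exact edge_mem_link G ha hb hab
    have hax : a ∈ G.neighborSet x := h1.2 a (Sym2.mem_mk_left a b)
    have hbx : b ∈ G.neighborSet x := h1.2 b (Sym2.mem_mk_right a b)
    exact ⟨⟨hax, b, hbx, hab⟩, ⟨hbx, a, hax, hab.symm⟩, hax, hbx⟩
  set p : G.neighborSet x → Prop := fun a => a.1 ∈ S with hp
  set q : G.neighborSet y → Prop := fun a => a.1 ∈ S with hq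
  let lEquiv : {a : G.neighborSet x // p a} ≃ {b : G.neighborSet y // q b} :=
    { toFun := fun a => ⟨⟨a.1.1, hSy a.2⟩, a.2⟩
      invFun := fun b => ⟨⟨b.1.1, hSx b.2⟩, b.2⟩
      left_inv := fun a => rfl
      right_inv := fun b => rfl }
  have hcard : Nat.card {a : G.neighborSet x // ¬ p a} =
      Nat.card {b : G.neighborSet y // ¬ q b} := by
    have h1 : Nat.card (G.neighborSet x) = Nat.card (G.neighborSet y) :=
      Nat.card_congr hiso.some.toEquiv
    have h2 : Nat.card {a : G.neighborSet x // p a} + Nat.card {a : G.neighborSet x // ¬ p a}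
        = Nat.card (G.neighborSet x) := by
      rw [← Nat.card_sum]; exact Nat.card_congr (Equiv.sumCompl p)
    have h3 : Nat.card {b : G.neighborSet y // q b} + Nat.card {b : G.neighborSet y // ¬ q b}
        = Nat.card (G.neighborSet y) := by
      rw [← Nat.card_sum]; exact Nat.card_congr (Equiv.sumCompl q)
    have h4 : Nat.card {a : G.neighborSet x // p a} =
        Nat.card {b : G.neighborSet y // q b} := Nat.card_congr lEquiv
    omega
  obtain ⟨r⟩ : Nonempty ({a : G.neighborSet x // ¬ p a} ≃ {b : G.neighborSet y // ¬ q b}) :=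
    Finite.card_eq.mp hcard
  set e : G.neighborSet x ≃ G.neighborSet y :=
    (Equiv.sumCompl p).symm.trans ((lEquiv.sumCongr r).trans (Equiv.sumCompl q)) with he
  have he1 : ∀ (a : G.neighborSet x) (h : p a), (e a).1 = a.1 := by
    intro a h
    simp only [he, Equiv.trans_apply, Equiv.sumCompl_symm_apply_of_pos h,
      Equiv.sumCongr_apply, Sum.map_inl, Equiv.sumCompl_apply_inl]
    rfl
  have he2 : ∀ (a : G.neighborSet x), ¬ p a → ¬ q (e a) := by
    intro a h
    simp only [he, Equiv.trans_apply, Equiv.sumCompl_symm_apply_of_neg h,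
      Equiv.sumCongr_apply, Sum.map_inr, Equiv.sumCompl_apply_inr]
    exact (r ⟨a, h⟩).2
  refine ⟨e, ?_, ?_⟩
  · intro a b
    constructor
    · intro hab
      have hpa : p a := ⟨a.2, b.1, b.2, hab⟩
      have hpb : p b := ⟨b.2, a.1, a.2, hab.symm⟩
      rw [he1 a hpa, he1 b hpb] at *
      exact hab
    · intro hab
      have h := hact (e a).1 (e b).1 (e a).2 (e b).2 hab
      have hpa : p a := by
        by_contra hc
        exact he2 a hc h.1
      have hpb : p b := by
        by_contra hc
        exact he2 b hc h.2.1
      rwa [he1 a hpa, he1 b hpb] at hab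
  · intro a b hab
    have hpa : p a := ⟨a.2, b.1, b.2, hab⟩
    have hpb : p b := ⟨b.2, a.1, a.2, hab.symm⟩
    rw [he1 a hpa, he1 b hpb]

end Aux

section Aux2
variable {V : Type*} (G : SimpleGraph V)

lemma labeledLinkIso_symm {ℓ : Sym2 V → ℕ+} {x y : V} (h : LabeledLinkIso G ℓ x y) :
    LabeledLinkIso G ℓ y x := by
  obtain ⟨e, hadj, hlab⟩ := h
  refine ⟨e.symm, fun a b => ?_, fun a b hab => ?_⟩
  · rw [hadj (e.symm a) (e.symm b), e.apply_symm_apply, e.apply_symm_apply]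
  · have h1 := hlab (e.symm a) (e.symm b)
    rw [hadj (e.symm a) (e.symm b), e.apply_symm_apply, e.apply_symm_apply] at h1
    exact (h1 hab).symm

lemma linkEdgeSet_subset_of {ℓ : Sym2 V → ℕ+} (hinj : Function.Injective ℓ) {x y : V}
    (h : LabeledLinkIso G ℓ x y) : linkEdgeSet G x ⊆ linkEdgeSet G y := by
  obtain ⟨e, hadj, hlab⟩ := h
  intro f hf
  induction f with
  | _ a b =>
    have hab : G.Adj a b := hf.1
    have ha : a ∈ G.neighborSet x := hf.2 a (Sym2.mem_mk_left a b)
    have hb : b ∈ G.neighborSet x := hf.2 b (Sym2.mem_mk_right a b)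
    have h1 : s(a, b) = s((e ⟨a, ha⟩).1, (e ⟨b, hb⟩).1) := hinj (hlab ⟨a, ha⟩ ⟨b, hb⟩ hab)
    rw [h1]
    exact edge_mem_link G (e ⟨a, ha⟩).2 (e ⟨b, hb⟩).2 ((hadj ⟨a, ha⟩ ⟨b, hb⟩).mp hab)

end Aux2


/-- G admits a link-irregular labeling iff for all distinct x, y either
L(x) ≇ L(y) or E(L(x)) ≠ E(L(y)). -/
theorem stmt_0 {V : Type*} [Fintype V] (G : SimpleGraph V) :
    HasLinkIrregularLabeling G ↔
      ∀ x y : V, x ≠ y →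
        (¬ Nonempty ((G.induce (G.neighborSet x)) ≃g (G.induce (G.neighborSet y)))) ∨
        linkEdgeSet G x ≠ linkEdgeSet G y := by
  constructor
  · rintro ⟨ℓ, hℓ⟩ x y hxy
    by_contra hc
    push_neg at hc
    exact hℓ x y hxy (labeledLinkIso_of_iso_of_eq G hc.1 hc.2 ℓ)
  · intro h
    obtain ⟨f, hf⟩ := Countable.exists_injective_nat (Sym2 V)
    refine ⟨fun e => ⟨f e + 1, Nat.succ_pos _⟩, ?_⟩
    have hinj : Function.Injective (fun e => (⟨f e + 1, Nat.succ_pos _⟩ : ℕ+)) := by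
      intro a b hab
      apply hf
      have h2 : f a + 1 = f b + 1 := congrArg PNat.val hab
      omega
    rintro x y hxy hLL
    rcases h x y hxy with hi | he
    · obtain ⟨e, hadj, _⟩ := hLL
      exact hi ⟨⟨e, fun {a b} => (hadj a b).symm⟩⟩
    · exact he (Set.Subset.antisymm (linkEdgeSet_subset_of G hinj hLL)
        (linkEdgeSet_subset_of G hinj (labeledLinkIso_symm G hLL)))
end

section
/- No bipartite finite simple graph on at least two vertices admits a link-irregular labeling. -/
open SimpleGraph

variable {V : Type*}

/-- no bipartite graph on at least two vertices admits a link-irregular labeling. -/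
theorem stmt_3 {V : Type*} [Fintype V] (G : SimpleGraph V)
    (hbip : ∃ A : Set V, ∀ u v : V, G.Adj u v → (u ∈ A ↔ v ∉ A))
    (hcard : 2 ≤ Fintype.card V) :
    ¬ HasLinkIrregularLabeling G := by
  classical
  rintro ⟨ℓ, hℓ⟩
  obtain ⟨A, hA⟩ := hbip
  -- Neighbors of any vertex form an independent set.
  have hind : ∀ x a b : V, a ∈ G.neighborSet x → b ∈ G.neighborSet x → ¬ G.Adj a b := by
    intro x a b ha hb hab
    have h1 := hA x a ha
    have h2 := hA x b hb
    have h3 := hA a b hab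
    by_cases hx : x ∈ A <;> tauto
  -- Two distinct vertices with equal degrees exist.
  obtain ⟨u, v, huv, hdeg⟩ : ∃ u v : V, u ≠ v ∧ G.degree u = G.degree v := by
    by_contra h
    push_neg at h
    have hinj : Function.Injective (fun x : V => G.degree x) := by
      intro a b hab
      by_contra hne
      exact h a b hne hab
    set n := Fintype.card V with hn
    have hlt : ∀ x : V, G.degree x < n := fun x => G.degree_lt_card_verts x
    have hinj2 : Function.Injective (fun x : V => (⟨G.degree x, hlt x⟩ : Fin n)) := by
      intro a b hab
      exact hinj (by simpa using congrArg Fin.val hab)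
    have hsurj : Function.Surjective (fun x : V => (⟨G.degree x, hlt x⟩ : Fin n)) := by
      exact ((Fintype.bijective_iff_injective_and_card _).2
        ⟨hinj2, by simp [hn]⟩).surjective
    obtain ⟨w, hw⟩ := hsurj ⟨n - 1, by omega⟩
    obtain ⟨z, hz⟩ := hsurj ⟨0, by omega⟩
    have hw' : G.degree w = n - 1 := congrArg Fin.val hw
    have hz' : G.degree z = 0 := congrArg Fin.val hz
    have hwz : w ≠ z := by
      intro hh; rw [hh, hz'] at hw'; omega
    -- w is adjacent to every other vertex, in particular z
    have hsub : G.neighborFinset w ⊆ Finset.univ.erase w := by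
      intro x hx
      simp only [Finset.mem_erase, Finset.mem_univ, and_true]
      intro hxw
      exact G.loopless.irrefl w (by simpa [hxw] using (G.mem_neighborFinset w x).1 hx)
    have hcards : (Finset.univ.erase w).card = n - 1 := by
      simp [Finset.card_erase_of_mem, hn]
    have heq : G.neighborFinset w = Finset.univ.erase w := by
      apply Finset.eq_of_subset_of_card_le hsub
      rw [hcards, ← hw']
      exact le_of_eq (G.card_neighborFinset_eq_degree w).symm
    have hzadj : G.Adj w z := by
      rw [← G.mem_neighborFinset, heq]
      simp [hwz.symm]
    have : 0 < G.degree z := by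
      rw [← G.card_neighborFinset_eq_degree]
      exact Finset.card_pos.2 ⟨w, (G.mem_neighborFinset z w).2 hzadj.symm⟩
    omega
  -- Build the labeled link isomorphism.
  have hcardeq : Fintype.card (G.neighborSet u) = Fintype.card (G.neighborSet v) := by
    rw [G.card_neighborSet_eq_degree, G.card_neighborSet_eq_degree]
    exact hdeg
  obtain ⟨e⟩ := Fintype.card_eq.1 hcardeq
  refine hℓ u v huv ⟨e, ?_, ?_⟩
  · intro a b
    constructor
    · intro hab
      exact absurd hab (hind u a.1 b.1 a.2 b.2)
    · intro hab
      exact absurd hab (hind v (e a).1 (e b).1 (e a).2 (e b).2)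
  · intro a b hab
    exact absurd hab (hind u a.1 b.1 a.2 b.2)
end
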